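/- Let X, Y be subspaces of a real inner product space with dim X = dim Y = n < ∞ and dist_a(X, Y) < 1. Then for any a-orthonormal basis {x_j}_{j=1}^n of X there exists an a-orthonormal basis {y_j}_{j=1}^n of Y such that dist_a(x_j, y_j) ≤ (1 + √n)·sqrt(2 − 2·sqrt(1 − dist_a(X,Y)²)) for every j. -/

import Mathlib

/-- Distance from subspace `X` to subspace `Y`: supremum over unit vectors of `X` of the
distance to `Y`. -/
noncomputable def distSub {H : Type*} [NormedAddCommGroup H] [InnerProductSpace ℝ H]
    (X Y : Submodule ℝ H) : ℝ :=
  ⨆ u : {u : H // u ∈ X ∧ ‖u‖ = 1}, ⨅ v : Y, ‖u.1 - (v : H)‖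

/-- Distance between nonzero vectors: distance between their spans. -/
noncomputable def distVecVec {H : Type*} [NormedAddCommGroup H] [InnerProductSpace ℝ H]
    (u v : H) : ℝ :=
  distSub (Submodule.span ℝ {u}) (Submodule.span ℝ {v})

section helpers

variable {H : Type*} [NormedAddCommGroup H] [InnerProductSpace ℝ H] {n : ℕ}

lemma iInf_norm_sub_le_distSub (X Y : Submodule ℝ H) (u : H) (hu : u ∈ X) (h1 : ‖u‖ = 1) :
    (⨅ v : Y, ‖u - (v : H)‖) ≤ distSub X Y := by
  have hbdd : BddAbove (Set.range fun u : {u : H // u ∈ X ∧ ‖u‖ = 1} =>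
      ⨅ v : Y, ‖u.1 - (v : H)‖) := by
    refine ⟨1, ?_⟩
    rintro r ⟨⟨u, hu, h1⟩, rfl⟩
    have : (⨅ v : Y, ‖u - (v : H)‖) ≤ ‖u - ((0 : Y) : H)‖ := by
      refine ciInf_le ⟨0, ?_⟩ (0 : Y)
      rintro r ⟨v, rfl⟩; exact norm_nonneg _
    simpa [h1] using this
  exact le_ciSup hbdd (⟨u, hu, h1⟩ : {u : H // u ∈ X ∧ ‖u‖ = 1})

lemma distVecVec_le_norm_sub (a b : H) (ha : ‖a‖ = 1) :
    distVecVec a b ≤ ‖a - b‖ := by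
  refine Real.iSup_le ?_ (norm_nonneg _)
  rintro ⟨u, hu, h1⟩
  obtain ⟨c, rfl⟩ := Submodule.mem_span_singleton.mp hu
  have hbdd : BddBelow (Set.range fun v : (Submodule.span ℝ {b}) => ‖c • a - (v : H)‖) := by
    refine ⟨0, ?_⟩; rintro r ⟨v, rfl⟩; exact norm_nonneg _
  have : (⨅ v : (Submodule.span ℝ {b}), ‖c • a - (v : H)‖) ≤ ‖c • a - c • b‖ :=
    ciInf_le hbdd ⟨c • b, Submodule.smul_mem _ _ (Submodule.mem_span_singleton_self b)⟩
  refine this.trans ?_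
  have hc : ‖c‖ = 1 := by rw [norm_smul, ha, mul_one] at h1; exact h1
  rw [← smul_sub, norm_smul, hc, one_mul]

open Finset in
noncomputable def comb (w : Fin n → H) : EuclideanSpace ℝ (Fin n) →ₗ[ℝ] H where
  toFun c := ∑ i, c i • w i
  map_add' a b := by simp [add_smul, Finset.sum_add_distrib]
  map_smul' r a := by simp [smul_smul, Finset.smul_sum]

noncomputable def gramOp (w : Fin n → H) :
    EuclideanSpace ℝ (Fin n) →ₗ[ℝ] EuclideanSpace ℝ (Fin n) where
  toFun c := WithLp.toLp 2 (fun j => inner ℝ (comb w c) (w j))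
  map_add' a b := by ext j; simp [inner_add_left]
  map_smul' r a := by ext j; simp [inner_smul_left]

lemma inner_gramOp (w : Fin n → H) (c c' : EuclideanSpace ℝ (Fin n)) :
    (inner ℝ c (gramOp w c') : ℝ) = inner ℝ (comb w c') (comb w c) := by
  rw [PiLp.inner_apply]
  simp only [RCLike.inner_apply, conj_trivial]
  simp only [gramOp, LinearMap.coe_mk, AddHom.coe_mk]
  simp only [comb, LinearMap.coe_mk]
  simp only [AddHom.coe_mk, inner_sum, real_inner_smul_right]
  exact Finset.sum_congr rfl fun _ _ => mul_comm _ _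

lemma gramOp_isSymmetric (w : Fin n → H) : (gramOp w).IsSymmetric := by
  intro c c'
  calc (inner ℝ ((gramOp w) c) c') = (inner ℝ c' ((gramOp w) c) : ℝ) := real_inner_comm _ _
    _ = inner ℝ (comb w c) (comb w c') := inner_gramOp w c' c
    _ = inner ℝ (comb w c') (comb w c) := real_inner_comm _ _
    _ = inner ℝ c ((gramOp w) c') := (inner_gramOp w c c').symm

lemma comb_single (w : Fin n → H) (j : Fin n) :
    comb w (EuclideanSpace.single j (1:ℝ)) = w j := by
  simp [comb, EuclideanSpace.single_apply, Finset.sum_ite_eq, ite_smul]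

lemma sum_sq_coord (c : EuclideanSpace ℝ (Fin n)) : ∑ i, (c i)^2 = ‖c‖^2 := by
  rw [EuclideanSpace.norm_eq, Real.sq_sqrt (by positivity)]
  simp [Real.norm_eq_abs, sq_abs]

lemma norm_comb_orthonormal {x : Fin n → H} (hx : Orthonormal ℝ x)
    (c : EuclideanSpace ℝ (Fin n)) : ‖comb x c‖ = ‖c‖ := by
  have h : ‖comb x c‖^2 = ‖c‖^2 := by
    rw [← real_inner_self_eq_norm_sq]
    simp only [comb, LinearMap.coe_mk, AddHom.coe_mk]
    rw [hx.inner_sum, ← sum_sq_coord]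
    simp [sq]
  rw [← Real.sqrt_sq (norm_nonneg (comb x c)), h, Real.sqrt_sq (norm_nonneg c)]

lemma sum_abs_le_sqrt (c : EuclideanSpace ℝ (Fin n)) (h1 : ‖c‖ = 1) :
    ∑ i, |c i| ≤ Real.sqrt n := by
  have h : (∑ i, |c i|)^2 ≤ (n : ℝ) := by
    have := sq_sum_le_card_mul_sum_sq (s := (Finset.univ : Finset (Fin n)))
      (f := fun i => |c i|)
    simp only [Finset.card_univ, Fintype.card_fin, sq_abs] at this
    calc (∑ i, |c i|)^2 ≤ (n:ℝ) * ∑ i, (c i)^2 := by exact_mod_cast this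
      _ = n := by rw [sum_sq_coord, h1]; ring
  calc ∑ i, |c i| = Real.sqrt ((∑ i, |c i|)^2) :=
        (Real.sqrt_sq (Finset.sum_nonneg fun i _ => abs_nonneg _)).symm
    _ ≤ Real.sqrt n := Real.sqrt_le_sqrt h

end helpers

theorem stmt4 {H : Type*} [NormedAddCommGroup H] [InnerProductSpace ℝ H]
    (n : ℕ) (X Y : Submodule ℝ H)
    [FiniteDimensional ℝ X] [FiniteDimensional ℝ Y]
    (hdX : Module.finrank ℝ X = n) (hdY : Module.finrank ℝ Y = n)
    (hdist : distSub X Y < 1)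
    (x : Fin n → H) (hxon : Orthonormal ℝ x) (hxspan : Submodule.span ℝ (Set.range x) = X) :
    ∃ y : Fin n → H, Orthonormal ℝ y ∧ Submodule.span ℝ (Set.range y) = Y ∧
      ∀ j, distVecVec (x j) (y j) ≤
        (1 + Real.sqrt n) * Real.sqrt (2 - 2 * Real.sqrt (1 - distSub X Y ^ 2)) := by
  classical
  set d := distSub X Y with hd
  have hxX : ∀ j, x j ∈ X := fun j => hxspan ▸ Submodule.subset_span ⟨j, rfl⟩
  have hx1 : ∀ j, ‖x j‖ = 1 := hxon.1
  set z : Fin n → H := fun j => (Y.orthogonalProjectionOnto (x j) : H) with hz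
  have hzY : ∀ j, z j ∈ Y := fun j => (Y.orthogonalProjectionOnto (x j)).2
  have hzd : ∀ j, ‖x j - z j‖ ≤ d := by
    intro j
    show ‖x j - Y.starProjection (x j)‖ ≤ d
    rw [Submodule.starProjection_minimal]
    exact iInf_norm_sub_le_distSub X Y (x j) (hxX j) (hx1 j)
  have hd0 : ∀ _ : Fin n, (0:ℝ) ≤ d := fun j => le_trans (norm_nonneg _) (hzd j)
  have hinner : ∀ j, (inner ℝ (x j) (z j) : ℝ) = ‖z j‖^2 := by
    intro j
    have h0 := Submodule.starProjection_inner_eq_zero (𝕜 := ℝ) (K := Y) (x j) (z j) (hzY j)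
    rw [inner_sub_left] at h0
    change inner ℝ (x j) (z j) - inner ℝ (z j) (z j) = 0 at h0
    rw [← real_inner_self_eq_norm_sq]
    linarith [h0]
  have hz2 : ∀ j, ‖z j‖^2 = 1 - ‖x j - z j‖^2 := by
    intro j
    have hexp := norm_sub_sq_real (x j) (z j)
    rw [hx1 j, hinner j] at hexp
    nlinarith
  have hzlb : ∀ j, Real.sqrt (1 - d^2) ≤ ‖z j‖ := by
    intro j
    have h1 : 1 - d^2 ≤ ‖z j‖^2 := by nlinarith [hzd j, hz2 j, norm_nonneg (x j - z j), hd0 j]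
    calc Real.sqrt (1 - d^2) ≤ Real.sqrt (‖z j‖^2) := Real.sqrt_le_sqrt h1
      _ = ‖z j‖ := Real.sqrt_sq (norm_nonneg _)
  have hzpos : ∀ j, 0 < ‖z j‖ := by
    intro j
    have h1 : 0 < Real.sqrt (1 - d^2) := Real.sqrt_pos.2 (by nlinarith [hd0 j, hdist])
    exact lt_of_lt_of_le h1 (hzlb j)
  set ε := Real.sqrt (2 - 2*Real.sqrt (1 - d^2)) with hε
  have hε0 : (0:ℝ) ≤ ε := Real.sqrt_nonneg _
  have hsle : Real.sqrt (1 - d ^ 2) ≤ 1 := Real.sqrt_le_one.mpr (by nlinarith [sq_nonneg d])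
  have hε2 : ε^2 = 2 - 2*Real.sqrt (1 - d^2) := Real.sq_sqrt (by linarith)
  set w : Fin n → H := fun j => ‖z j‖⁻¹ • z j with hw
  have hwY : ∀ j, w j ∈ Y := fun j => Submodule.smul_mem _ _ (hzY j)
  have hw1 : ∀ j, ‖w j‖ = 1 := by
    intro j
    rw [hw]
    simp only [norm_smul, Real.norm_eq_abs, abs_inv, abs_of_pos (hzpos j)]
    exact inv_mul_cancel₀ (hzpos j).ne'
  have hxw : ∀ j, ‖x j - w j‖ ≤ ε := by
    intro j
    have hiw : (inner ℝ (x j) (w j) : ℝ) = ‖z j‖ := by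
      rw [hw]
      simp only [real_inner_smul_right]
      rw [hinner j]
      field_simp [sq]
    have hsq : ‖x j - w j‖^2 = 2 - 2*‖z j‖ := by
      rw [norm_sub_sq_real, hx1 j, hw1 j, hiw]; ring
    have h2 : ‖x j - w j‖^2 ≤ ε^2 := by
      rw [hsq, hε2]; linarith [hzlb j]
    calc ‖x j - w j‖ = Real.sqrt (‖x j - w j‖^2) := (Real.sqrt_sq (norm_nonneg _)).symm
      _ ≤ Real.sqrt (ε^2) := Real.sqrt_le_sqrt h2
      _ = ε := Real.sqrt_sq hε0
  -- injectivity of comb w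
  have hinj : ∀ c : EuclideanSpace ℝ (Fin n), comb w c = 0 → c = 0 := by
    intro c hc0
    set a : Fin n → ℝ := fun i => c i * ‖z i‖⁻¹ with ha
    set v : H := ∑ i, a i • x i with hv
    have hvX : v ∈ X := Submodule.sum_mem _ fun i _ => Submodule.smul_mem _ _ (hxX i)
    have hPv : (Y.orthogonalProjectionOnto v : H) = comb w c := by
      rw [hv, map_sum]
      simp only [map_smul, Submodule.coe_sum, Submodule.coe_smul]
      rw [comb]
      simp only [LinearMap.coe_mk, AddHom.coe_mk]
      refine Finset.sum_congr rfl fun i _ => ?_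
      rw [hw, ha, smul_smul]
    have hv0 : v = 0 := by
      by_contra hne
      have hnv : 0 < ‖v‖ := norm_pos_iff.mpr hne
      set u : H := ‖v‖⁻¹ • v with hu
      have huX : u ∈ X := Submodule.smul_mem _ _ hvX
      have hu1 : ‖u‖ = 1 := by
        rw [hu, norm_smul, Real.norm_eq_abs, abs_inv, abs_of_pos hnv]
        exact inv_mul_cancel₀ hnv.ne'
      have hPu : (Y.orthogonalProjectionOnto u : H) = 0 := by
        rw [hu, map_smul]
        simp only [Submodule.coe_smul]
        rw [hPv, hc0, smul_zero]
      have hle : ‖u - (Y.orthogonalProjectionOnto u : H)‖ ≤ d := by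
        rw [← Submodule.starProjection_apply, Submodule.starProjection_minimal]
        exact iInf_norm_sub_le_distSub X Y u huX hu1
      rw [hPu, sub_zero, hu1] at hle
      exact absurd (lt_of_le_of_lt hle hdist) (lt_irrefl 1)
    have haz : ∀ i, a i = 0 :=
      Fintype.linearIndependent_iff.mp hxon.linearIndependent a (by rw [← hv, hv0])
    ext i
    have h1 := haz i
    rw [ha] at h1
    have h2 : ‖z i‖⁻¹ ≠ 0 := inv_ne_zero (hzpos i).ne'
    have : c i = 0 := by
      rcases mul_eq_zero.mp h1 with h | h
      · exact h
      · exact absurd h h2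
    simpa using this
  -- eigen machinery
  have hTsym := gramOp_isSymmetric w
  have hfr : Module.finrank ℝ (EuclideanSpace ℝ (Fin n)) = n := finrank_euclideanSpace_fin
  set e := hTsym.eigenvectorBasis hfr with he
  set ev := hTsym.eigenvalues hfr with hev
  have heig : ∀ m, gramOp w (e m) = ev m • e m := fun m => by
    exact_mod_cast hTsym.apply_eigenvectorBasis hfr m
  have hipc : ∀ m m', (inner ℝ (comb w (e m)) (comb w (e m')) : ℝ)
      = if m' = m then ev m else 0 := by
    intro m m'
    rw [← inner_gramOp w (e m') (e m), heig m, real_inner_smul_right,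
      orthonormal_iff_ite.mp e.orthonormal]
    split <;> ring
  set μ : Fin n → ℝ := fun m => ‖comb w (e m)‖ with hμ
  have hμsq : ∀ m, μ m ^ 2 = ev m := by
    intro m
    have := hipc m m
    rw [if_pos rfl, real_inner_self_eq_norm_sq] at this
    simpa [hμ] using this
  have hμpos : ∀ m, 0 < μ m := by
    intro m
    refine norm_pos_iff.mpr fun h0 => ?_
    exact e.orthonormal.ne_zero m (hinj _ h0)
  set q : Fin n → H := fun m => (μ m)⁻¹ • comb w (e m) with hq
  have hcombe : ∀ m, comb w (e m) = μ m • q m := by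
    intro m
    rw [hq]
    simp only
    rw [smul_inv_smul₀ (hμpos m).ne']
  have hqip : ∀ m m', (inner ℝ (q m) (q m') : ℝ) = if m = m' then 1 else 0 := by
    intro m m'
    rw [hq]
    simp only [real_inner_smul_left, real_inner_smul_right]
    rcases eq_or_ne m m' with rfl | hne
    · rw [hipc m m, if_pos rfl, if_pos rfl, ← hμsq, sq]
      field_simp
      exact div_self (hμpos m).ne'
    · rw [hipc m m', if_neg (fun h => hne h.symm), if_neg hne]
      ring
  have hqon : Orthonormal ℝ q := orthonormal_iff_ite.mpr hqip
  have hqY : ∀ m, q m ∈ Y := by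
    intro m
    refine Submodule.smul_mem _ _ ?_
    show (∑ i, (e m) i • w i) ∈ Y
    exact Submodule.sum_mem _ fun i _ => Submodule.smul_mem _ _ (hwY i)
  set y : Fin n → H := fun j => ∑ m, (e m j) • q m with hy
  have hyY : ∀ j, y j ∈ Y := fun j =>
    Submodule.sum_mem _ fun m _ => Submodule.smul_mem _ _ (hqY m)
  have hemfj : ∀ (m) (p : Fin n), (inner ℝ (e m) (EuclideanSpace.single p (1:ℝ)) : ℝ) = e m p := by
    intro m p
    rw [EuclideanSpace.inner_single_right]
    simp
  have hpars : ∀ p p' : Fin n, ∑ m, (e m p) * (e m p') = if p = p' then 1 else 0 := by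
    intro p p'
    have key := e.sum_inner_mul_inner (EuclideanSpace.single p (1:ℝ))
      (EuclideanSpace.single p' (1:ℝ))
    calc ∑ m, (e m p) * (e m p')
        = ∑ m, (inner ℝ (EuclideanSpace.single p (1:ℝ)) (e m) : ℝ) *
            (inner ℝ (e m) (EuclideanSpace.single p' (1:ℝ)) : ℝ) := by
          refine Finset.sum_congr rfl fun m _ => ?_
          rw [hemfj, EuclideanSpace.inner_single_left]
          simp
      _ = (inner ℝ (EuclideanSpace.single p (1:ℝ)) (EuclideanSpace.single p' (1:ℝ)) : ℝ) := key
      _ = if p = p' then 1 else 0 := by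
          rw [EuclideanSpace.inner_single_left]
          simp [EuclideanSpace.single_apply]
  have hyon : Orthonormal ℝ y := by
    rw [orthonormal_iff_ite]
    intro p p'
    simp only [hy]
    rw [hqon.inner_sum]
    simpa using hpars p p'
  have hwj : ∀ j, w j = ∑ m, ((e m j) * μ m) • q m := by
    intro j
    have h1 : (EuclideanSpace.single j (1:ℝ))
        = ∑ m, (inner ℝ (e m) (EuclideanSpace.single j (1:ℝ)) : ℝ) • e m := (e.sum_repr' _).symm
    calc w j = comb w (EuclideanSpace.single j 1) := (comb_single w j).symm
      _ = ∑ m, (inner ℝ (e m) (EuclideanSpace.single j (1:ℝ)) : ℝ) • comb w (e m) := by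
          conv_lhs => rw [h1]
          rw [map_sum]
          simp only [LinearMap.map_smul]
      _ = ∑ m, ((e m j) * μ m) • q m := by
          refine Finset.sum_congr rfl fun m _ => ?_
          rw [hemfj, hcombe, smul_smul]
  have hyw : ∀ j, y j - w j = ∑ m, ((e m j) * (1 - μ m)) • q m := by
    intro j
    simp only [hy]
    rw [hwj j, ← Finset.sum_sub_distrib]
    refine Finset.sum_congr rfl fun m _ => ?_
    rw [← sub_smul]
    congr 1
    ring
  have hμbd : ∀ m, |1 - μ m| ≤ Real.sqrt n * ε := by
    intro m
    have hxm : ‖comb x (e m)‖ = 1 := by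
      rw [norm_comb_orthonormal hxon, e.orthonormal.1 m]
    have hdiff : comb x (e m) - comb w (e m) = ∑ i, (e m i) • (x i - w i) := by
      show (∑ i, (e m) i • x i) - (∑ i, (e m) i • w i) = _
      rw [← Finset.sum_sub_distrib]
      simp [smul_sub]
    have h3 : ‖comb x (e m) - comb w (e m)‖ ≤ Real.sqrt n * ε := by
      rw [hdiff]
      calc ‖∑ i, (e m i) • (x i - w i)‖ ≤ ∑ i, ‖(e m i) • (x i - w i)‖ := norm_sum_le _ _
        _ ≤ ∑ i, |e m i| * ε := by
            refine Finset.sum_le_sum fun i _ => ?_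
            rw [norm_smul, Real.norm_eq_abs]
            exact mul_le_mul_of_nonneg_left (hxw i) (abs_nonneg _)
        _ = (∑ i, |e m i|) * ε := by rw [Finset.sum_mul]
        _ ≤ Real.sqrt n * ε :=
            mul_le_mul_of_nonneg_right (sum_abs_le_sqrt _ (e.orthonormal.1 m)) hε0
    calc |1 - μ m| = |‖comb x (e m)‖ - ‖comb w (e m)‖| := by rw [hxm, hμ]
      _ ≤ ‖comb x (e m) - comb w (e m)‖ := abs_norm_sub_norm_le _ _
      _ ≤ _ := h3
  have hywb : ∀ j, ‖y j - w j‖ ≤ Real.sqrt n * ε := by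
    intro j
    have h1 : ‖y j - w j‖^2 = ∑ m, ((e m j) * (1 - μ m))^2 := by
      rw [hyw j, ← real_inner_self_eq_norm_sq, hqon.inner_sum]
      simp [sq]
    have h2 : ‖y j - w j‖^2 ≤ (Real.sqrt n * ε)^2 := by
      rw [h1]
      have hsum1 : ∑ m, (e m j)^2 = 1 := by
        have := hpars j j
        rw [if_pos rfl] at this
        simpa [sq] using this
      calc ∑ m, ((e m j) * (1 - μ m))^2
          ≤ ∑ m, (e m j)^2 * (Real.sqrt n * ε)^2 := by
            refine Finset.sum_le_sum fun m _ => ?_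
            rw [mul_pow]
            refine mul_le_mul_of_nonneg_left ?_ (sq_nonneg _)
            calc (1 - μ m)^2 = |1 - μ m|^2 := (sq_abs _).symm
              _ ≤ (Real.sqrt n * ε)^2 := pow_le_pow_left₀ (abs_nonneg _) (hμbd m) 2
        _ = (∑ m, (e m j)^2) * (Real.sqrt n * ε)^2 := by rw [Finset.sum_mul]
        _ = (Real.sqrt n * ε)^2 := by rw [hsum1, one_mul]
    have h0 : (0:ℝ) ≤ Real.sqrt n * ε := mul_nonneg (Real.sqrt_nonneg _) hε0
    calc ‖y j - w j‖ = Real.sqrt (‖y j - w j‖^2) := (Real.sqrt_sq (norm_nonneg _)).symm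
      _ ≤ Real.sqrt ((Real.sqrt n * ε)^2) := Real.sqrt_le_sqrt h2
      _ = _ := Real.sqrt_sq h0
  have hspan : Submodule.span ℝ (Set.range y) = Y := by
    have hle : Submodule.span ℝ (Set.range y) ≤ Y :=
      Submodule.span_le.mpr (by rintro _ ⟨j, rfl⟩; exact hyY j)
    refine Submodule.eq_of_le_of_finrank_le hle ?_
    rw [finrank_span_eq_card hyon.linearIndependent, hdY, Fintype.card_fin]
  refine ⟨y, hyon, hspan, fun j => ?_⟩
  have h1 : distVecVec (x j) (y j) ≤ ‖x j - y j‖ := distVecVec_le_norm_sub _ _ (hx1 j)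
  have h2 : ‖x j - y j‖ ≤ ε + Real.sqrt n * ε := by
    calc ‖x j - y j‖ = ‖(x j - w j) + (w j - y j)‖ := by rw [sub_add_sub_cancel]
      _ ≤ ‖x j - w j‖ + ‖w j - y j‖ := norm_add_le _ _
      _ ≤ ε + Real.sqrt n * ε := add_le_add (hxw j) (by rw [norm_sub_rev]; exact hywb j)
  calc distVecVec (x j) (y j) ≤ ε + Real.sqrt n * ε := h1.trans h2
    _ = (1 + Real.sqrt n) * ε := by ring
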